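/- Let D > 0 be real, b ∈ ℂ, A = D + |b|², and let e(u) = |u|²·A − 2·Re(conj(u)·b) + 1 for u ∈ ℂ. Then the infimum over u ∈ ℂ and ρ ∈ (0, ∞) of ρ·e(u) − log ρ equals 1 − log(1 + |b|²/D), and it is attained exactly at u* = b/A and ρ* = 1 + |b|²/D. -/

import Mathlib

/-- The per-user mean square error for receiver weight `u`:
`e(u) = |u|² A - 2 Re(conj u · b) + 1`. -/
noncomputable def mseFun (A : ℝ) (b : ℂ) (u : ℂ) : ℝ :=
  ‖u‖ ^ 2 * A - 2 * (starRingEnd ℂ u * b).re + 1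

lemma sub_log_lb (x : ℝ) (hx : 0 < x) : 1 ≤ x - Real.log x := by
  have := Real.log_le_sub_one_of_pos hx; linarith

lemma sub_log_eq (x : ℝ) (hx : 0 < x) : x - Real.log x = 1 ↔ x = 1 := by
  constructor
  · intro h
    by_contra hne
    have hx1 : x - 1 ≠ 0 := by intro h'; exact hne (by linarith)
    have := Real.add_one_lt_exp hx1
    have hlt : Real.log x < x - 1 := (Real.log_lt_iff_lt_exp hx).2 (by linarith)
    linarith
  · intro h; simp [h]

lemma mse_eq (A : ℝ) (hA : 0 < A) (b u : ℂ) :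
    mseFun A b u = A * ‖u - b / (A : ℂ)‖ ^ 2 + (A - ‖b‖ ^ 2) / A := by
  have hA0 : (A : ℝ) ≠ 0 := ne_of_gt hA
  simp only [mseFun, Complex.sq_norm, Complex.normSq_apply,
    Complex.sub_re, Complex.sub_im, Complex.div_re, Complex.div_im,
    Complex.mul_re, Complex.mul_im, Complex.ofReal_re, Complex.ofReal_im,
    Complex.conj_re, Complex.conj_im]
  field_simp
  ring

lemma key_decomp (D : ℝ) (hD : 0 < D) (b u : ℂ) (ρ : ℝ) (hρ : 0 < ρ) :
    ρ * mseFun (D + ‖b‖ ^ 2) b u - Real.log ρ =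
      ρ * (D + ‖b‖ ^ 2) * ‖u - b / ((D + ‖b‖ ^ 2 : ℝ) : ℂ)‖ ^ 2 +
        ((ρ * D / (D + ‖b‖ ^ 2)) - Real.log (ρ * D / (D + ‖b‖ ^ 2))) -
        Real.log (1 + ‖b‖ ^ 2 / D) := by
  have hA : 0 < D + ‖b‖ ^ 2 := by positivity
  rw [mse_eq _ hA]
  have h1 : Real.log (ρ * D / (D + ‖b‖ ^ 2)) =
      Real.log ρ + Real.log D - Real.log (D + ‖b‖ ^ 2) := by
    rw [Real.log_div (by positivity) (ne_of_gt hA),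
      Real.log_mul (ne_of_gt hρ) (ne_of_gt hD)]
  have h2 : Real.log (1 + ‖b‖ ^ 2 / D) = Real.log (D + ‖b‖ ^ 2) - Real.log D := by
    rw [← Real.log_div (ne_of_gt hA) (ne_of_gt hD)]
    congr 1
    field_simp
  rw [h1, h2]
  ring

/-- Let `D > 0`, `b ∈ ℂ`, `A = D + |b|²` and `e(u) = |u|² A - 2 Re(conj u · b) + 1`.
The infimum over `u ∈ ℂ` and `ρ ∈ (0, ∞)` of `ρ · e(u) - log ρ` equals
`1 - log (1 + |b|² / D)`, and it is attained exactly at `u* = b / A` and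
`ρ* = 1 + |b|² / D`. -/
theorem wmmse_inner_infimum (D : ℝ) (hD : 0 < D) (b : ℂ) :
    (∀ u : ℂ, ∀ ρ : ℝ, 0 < ρ →
      1 - Real.log (1 + ‖b‖ ^ 2 / D) ≤ ρ * mseFun (D + ‖b‖ ^ 2) b u - Real.log ρ) ∧
    ((1 + ‖b‖ ^ 2 / D) * mseFun (D + ‖b‖ ^ 2) b (b / ((D + ‖b‖ ^ 2 : ℝ) : ℂ)) -
        Real.log (1 + ‖b‖ ^ 2 / D) = 1 - Real.log (1 + ‖b‖ ^ 2 / D)) ∧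
    (∀ u : ℂ, ∀ ρ : ℝ, 0 < ρ →
      (ρ * mseFun (D + ‖b‖ ^ 2) b u - Real.log ρ = 1 - Real.log (1 + ‖b‖ ^ 2 / D) ↔
        u = b / ((D + ‖b‖ ^ 2 : ℝ) : ℂ) ∧ ρ = 1 + ‖b‖ ^ 2 / D)) := by
  have hA : 0 < D + ‖b‖ ^ 2 := by positivity
  have hc : 0 < 1 + ‖b‖ ^ 2 / D := by positivity
  have hx1 : (1 + ‖b‖ ^ 2 / D) * D / (D + ‖b‖ ^ 2) = 1 := by
    field_simp
  refine ⟨?_, ?_, ?_⟩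
  · intro u ρ hρ
    rw [key_decomp D hD b u ρ hρ]
    have h1 := sub_log_lb (ρ * D / (D + ‖b‖ ^ 2)) (by positivity)
    have h2 : 0 ≤ ρ * (D + ‖b‖ ^ 2) * ‖u - b / ((D + ‖b‖ ^ 2 : ℝ) : ℂ)‖ ^ 2 := by
      positivity
    linarith
  · rw [key_decomp D hD b _ _ hc, hx1]
    simp
  · intro u ρ hρ
    rw [key_decomp D hD b u ρ hρ]
    have h1 := sub_log_lb (ρ * D / (D + ‖b‖ ^ 2)) (by positivity)
    have h2 : 0 ≤ ρ * (D + ‖b‖ ^ 2) * ‖u - b / ((D + ‖b‖ ^ 2 : ℝ) : ℂ)‖ ^ 2 := by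
      positivity
    constructor
    · intro h
      have ht : ρ * (D + ‖b‖ ^ 2) * ‖u - b / ((D + ‖b‖ ^ 2 : ℝ) : ℂ)‖ ^ 2 = 0 := by
        linarith
      have hx : ρ * D / (D + ‖b‖ ^ 2) = 1 := by
        rw [← sub_log_eq _ (by positivity)]; linarith
      have hu : u = b / ((D + ‖b‖ ^ 2 : ℝ) : ℂ) := by
        have hρA : ρ * (D + ‖b‖ ^ 2) ≠ 0 := by positivity
        have := (mul_eq_zero.1 ht).resolve_left hρA
        have hn : ‖u - b / ((D + ‖b‖ ^ 2 : ℝ) : ℂ)‖ = 0 := by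
          nlinarith [norm_nonneg (u - b / ((D + ‖b‖ ^ 2 : ℝ) : ℂ))]
        rwa [norm_eq_zero, sub_eq_zero] at hn
      refine ⟨hu, ?_⟩
      field_simp at hx ⊢
      linarith
    · rintro ⟨rfl, rfl⟩
      rw [hx1]
      simp
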